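/- arXiv:math/0202140 — 2 statements merged into one kernel-verified Lean document; each statement's English description precedes it below -/
import Mathlib

section
/- Let L : [0, δ] → ℝ be a nonnegative C² function with L(0) = 0 satisfying the differential inequality L''(r) ≥ L'(r)²/L(r) − Cλ wherever L(r) > 0, and suppose ∫₀^δ L(r) dr ≤ 1. Then there exists λ₀ and a constant C' depending only on C and δ such that for λ ≥ λ₀, L(r) ≤ C' λ r² for all r ∈ [0, δ/3]. -/
open Real MeasureTheory intervalIntegral

private lemma Bderiv (C lam : ℝ) (L : ℝ → ℝ) (s : ℝ)
    (hdL : DifferentiableAt ℝ L s) (hdL' : DifferentiableAt ℝ (deriv L) s)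
    (hp : 0 < L s) :
    HasDerivAt (fun t => (deriv L t)^2 / (L t)^2 - 2*C*lam / L t)
      ((2 * deriv L s / (L s)^2) *
        (deriv (deriv L) s - (deriv L s)^2 / L s + C*lam)) s := by
  have h2 : HasDerivAt L (deriv L s) s := hdL.hasDerivAt
  have h1 : HasDerivAt (fun t => deriv L t) (deriv (deriv L) s) s := hdL'.hasDerivAt
  have hq : HasDerivAt (fun t => (deriv L t)^2)
      ((2:ℕ) * (deriv L s)^(1:ℕ) * deriv (deriv L) s) s := by
    simpa using h1.fun_pow 2
  have hp2 : HasDerivAt (fun t => (L t)^2) ((2:ℕ) * (L s)^(1:ℕ) * deriv L s) s := by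
    simpa using h2.fun_pow 2
  have hne : L s ≠ 0 := hp.ne'
  have hne2 : (L s)^2 ≠ 0 := pow_ne_zero _ hne
  have hA := hq.div hp2 hne2
  have hB := (hasDerivAt_const s (2*C*lam)).div h2 hne
  have : HasDerivAt (fun t => (deriv L t)^2 / (L t)^2 - 2*C*lam / L t) _ s := hA.fun_sub hB
  convert this using 1
  field_simp
  ring

private lemma Bcont (δ C lam : ℝ) (L : ℝ → ℝ) (a b : ℝ)
    (hsub : Set.Icc a b ⊆ Set.Ioo 0 δ)
    (hdL : ∀ x ∈ Set.Ioo (0:ℝ) δ, DifferentiableAt ℝ L x)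
    (hcL' : ContinuousOn (deriv L) (Set.Ioo 0 δ))
    (hpos : ∀ s ∈ Set.Icc a b, 0 < L s) :
    ContinuousOn (fun t => (deriv L t)^2 / (L t)^2 - 2*C*lam / L t) (Set.Icc a b) := by
  have hcL : ContinuousOn L (Set.Icc a b) := fun x hx =>
    ((hdL x (hsub hx)).continuousAt).continuousWithinAt
  exact (((hcL'.mono hsub).pow 2).div (hcL.pow 2)
      (fun x hx => pow_ne_zero _ (hpos x hx).ne')).sub
    (continuousOn_const.div hcL (fun x hx => (hpos x hx).ne'))

private lemma Bantitone (δ C lam : ℝ) (L : ℝ → ℝ) (a b : ℝ)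
    (hsub : Set.Icc a b ⊆ Set.Ioo 0 δ)
    (hdL : ∀ x ∈ Set.Ioo (0:ℝ) δ, DifferentiableAt ℝ L x)
    (hdL' : ∀ x ∈ Set.Ioo (0:ℝ) δ, DifferentiableAt ℝ (deriv L) x)
    (hcL' : ContinuousOn (deriv L) (Set.Ioo 0 δ))
    (hdiff : ∀ r ∈ Set.Icc (0:ℝ) δ, 0 < L r →
        deriv (deriv L) r ≥ (deriv L r)^2 / L r - C * lam)
    (hpos : ∀ s ∈ Set.Icc a b, 0 < L s)
    (hsign : ∀ s ∈ Set.Ioo a b, deriv L s ≤ 0) :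
    AntitoneOn (fun t => (deriv L t)^2 / (L t)^2 - 2*C*lam / L t) (Set.Icc a b) := by
  have key : ∀ s ∈ Set.Ioo a b,
      HasDerivAt (fun t => (deriv L t)^2 / (L t)^2 - 2*C*lam / L t)
        ((2 * deriv L s / (L s)^2) *
          (deriv (deriv L) s - (deriv L s)^2 / L s + C*lam)) s := by
    intro s hs
    have hs' : s ∈ Set.Icc a b := Set.Ioo_subset_Icc_self hs
    exact Bderiv C lam L s (hdL s (hsub hs')) (hdL' s (hsub hs')) (hpos s hs')
  apply antitoneOn_of_deriv_nonpos (convex_Icc a b)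
      (Bcont δ C lam L a b hsub hdL hcL' hpos)
  · intro x hx
    rw [interior_Icc] at hx
    exact ((key x hx).differentiableAt).differentiableWithinAt
  · intro x hx
    rw [interior_Icc] at hx
    have hx' : x ∈ Set.Icc a b := Set.Ioo_subset_Icc_self hx
    rw [(key x hx).deriv]
    have h1 : 2 * deriv L x / (L x)^2 ≤ 0 := by
      apply div_nonpos_of_nonpos_of_nonneg
      · linarith [hsign x hx]
      · positivity
    have h2 : 0 ≤ deriv (deriv L) x - (deriv L x)^2 / L x + C*lam := by
      have := hdiff x (Set.Ioo_subset_Icc_self (hsub hx')) (hpos x hx')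
      linarith
    exact mul_nonpos_iff.2 (Or.inr ⟨h1, h2⟩)

private lemma Bmonotone (δ C lam : ℝ) (L : ℝ → ℝ) (a b : ℝ)
    (hsub : Set.Icc a b ⊆ Set.Ioo 0 δ)
    (hdL : ∀ x ∈ Set.Ioo (0:ℝ) δ, DifferentiableAt ℝ L x)
    (hdL' : ∀ x ∈ Set.Ioo (0:ℝ) δ, DifferentiableAt ℝ (deriv L) x)
    (hcL' : ContinuousOn (deriv L) (Set.Ioo 0 δ))
    (hdiff : ∀ r ∈ Set.Icc (0:ℝ) δ, 0 < L r →
        deriv (deriv L) r ≥ (deriv L r)^2 / L r - C * lam)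
    (hpos : ∀ s ∈ Set.Icc a b, 0 < L s)
    (hsign : ∀ s ∈ Set.Ioo a b, 0 ≤ deriv L s) :
    MonotoneOn (fun t => (deriv L t)^2 / (L t)^2 - 2*C*lam / L t) (Set.Icc a b) := by
  have key : ∀ s ∈ Set.Ioo a b,
      HasDerivAt (fun t => (deriv L t)^2 / (L t)^2 - 2*C*lam / L t)
        ((2 * deriv L s / (L s)^2) *
          (deriv (deriv L) s - (deriv L s)^2 / L s + C*lam)) s := by
    intro s hs
    have hs' : s ∈ Set.Icc a b := Set.Ioo_subset_Icc_self hs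
    exact Bderiv C lam L s (hdL s (hsub hs')) (hdL' s (hsub hs')) (hpos s hs')
  apply monotoneOn_of_deriv_nonneg (convex_Icc a b)
      (Bcont δ C lam L a b hsub hdL hcL' hpos)
  · intro x hx
    rw [interior_Icc] at hx
    exact ((key x hx).differentiableAt).differentiableWithinAt
  · intro x hx
    rw [interior_Icc] at hx
    have hx' : x ∈ Set.Icc a b := Set.Ioo_subset_Icc_self hx
    rw [(key x hx).deriv]
    have h1 : 0 ≤ 2 * deriv L x / (L x)^2 := by
      apply div_nonneg
      · linarith [hsign x hx]
      · positivity
    have h2 : 0 ≤ deriv (deriv L) x - (deriv L x)^2 / L x + C*lam := by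
      have := hdiff x (Set.Ioo_subset_Icc_self (hsub hx')) (hpos x hx')
      linarith
    exact mul_nonneg h1 h2

private lemma back_lemma (δ C lam : ℝ) (hδ : 0 < δ) (hC : 0 < C) (hlam : 0 < lam)
    (L : ℝ → ℝ)
    (hcont : ContinuousOn L (Set.Icc 0 δ))
    (hdL : ∀ x ∈ Set.Ioo (0:ℝ) δ, DifferentiableAt ℝ L x)
    (hdL' : ∀ x ∈ Set.Ioo (0:ℝ) δ, DifferentiableAt ℝ (deriv L) x)
    (hcL' : ContinuousOn (deriv L) (Set.Ioo 0 δ))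
    (hL0 : L 0 = 0)
    (hdiff : ∀ r ∈ Set.Icc (0:ℝ) δ, 0 < L r →
        deriv (deriv L) r ≥ (deriv L r)^2 / L r - C * lam)
    (r₁ : ℝ) (hr₁ : r₁ ∈ Set.Ioo (0:ℝ) δ)
    (hp1 : 0 < L r₁) (hq1 : deriv L r₁ < 0)
    (hG : 2*C*lam * L r₁ < (deriv L r₁)^2) : False := by
  set S : Set ℝ := {t | t ∈ Set.Icc 0 r₁ ∧ ∀ s ∈ Set.Icc t r₁, deriv L s < 0} with hS
  have hr₁S : r₁ ∈ S := by
    refine ⟨⟨hr₁.1.le, le_rfl⟩, fun s hs => ?_⟩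
    have : s = r₁ := le_antisymm hs.2 hs.1
    rwa [this]
  have hSne : S.Nonempty := ⟨r₁, hr₁S⟩
  have hSbdd : BddBelow S := ⟨0, fun t ht => ht.1.1⟩
  set t₀ := sInf S with ht₀
  have ht₀0 : 0 ≤ t₀ := le_csInf hSne (fun t ht => ht.1.1)
  have ht₀le : t₀ ≤ r₁ := csInf_le hSbdd hr₁S
  have hneg : ∀ s ∈ Set.Ioc t₀ r₁, deriv L s < 0 := by
    intro s hs
    obtain ⟨t, htS, hts⟩ := exists_lt_of_csInf_lt hSne hs.1
    exact htS.2 s ⟨hts.le, hs.2⟩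
  have hanti : AntitoneOn L (Set.Icc t₀ r₁) := by
    apply antitoneOn_of_deriv_nonpos (convex_Icc _ _)
        (hcont.mono (fun x hx => ⟨le_trans ht₀0 hx.1, le_trans hx.2 hr₁.2.le⟩))
    · intro x hx
      rw [interior_Icc] at hx
      exact (hdL x ⟨lt_of_le_of_lt ht₀0 hx.1, lt_trans hx.2 hr₁.2⟩).differentiableWithinAt
    · intro x hx
      rw [interior_Icc] at hx
      exact (hneg x ⟨hx.1, hx.2.le⟩).le
  have hLlb : ∀ s ∈ Set.Icc t₀ r₁, L r₁ ≤ L s := fun s hs =>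
    hanti hs ⟨ht₀le, le_rfl⟩ hs.2
  rcases eq_or_lt_of_le ht₀0 with h0|ht₀pos
  · have := hLlb 0 ⟨h0.ge, hr₁.1.le⟩
    rw [hL0] at this
    linarith
  -- t₀ > 0 : extension step
  have ht₀mem : t₀ ∈ Set.Ioo (0:ℝ) δ := ⟨ht₀pos, lt_of_le_of_lt ht₀le hr₁.2⟩
  have hsub : Set.Icc t₀ r₁ ⊆ Set.Ioo 0 δ := fun x hx =>
    ⟨lt_of_lt_of_le ht₀pos hx.1, lt_of_le_of_lt hx.2 hr₁.2⟩
  have hpos : ∀ s ∈ Set.Icc t₀ r₁, 0 < L s := fun s hs => lt_of_lt_of_le hp1 (hLlb s hs)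
  have hBanti := Bantitone δ C lam L t₀ r₁ hsub hdL hdL' hcL' hdiff hpos
      (fun s hs => (hneg s ⟨hs.1, hs.2.le⟩).le)
  have hBt₀ : (deriv L r₁)^2/(L r₁)^2 - 2*C*lam/(L r₁) ≤
      (deriv L t₀)^2/(L t₀)^2 - 2*C*lam/(L t₀) :=
    hBanti ⟨le_rfl, ht₀le⟩ ⟨ht₀le, le_rfl⟩ ht₀le
  have hbeta : 0 < (deriv L r₁)^2/(L r₁)^2 - 2*C*lam/(L r₁) := by
    have h := sub_pos.mpr hG
    have h2 := div_pos h (pow_pos hp1 2)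
    have e1 : ((deriv L r₁)^2 - 2*C*lam*L r₁)/(L r₁)^2
        = (deriv L r₁)^2/(L r₁)^2 - 2*C*lam/(L r₁) := by
      field_simp
    rwa [e1] at h2
  have hp0 : 0 < L t₀ := hpos t₀ ⟨le_rfl, ht₀le⟩
  have key0 : 2*C*lam*(L t₀) < (deriv L t₀)^2 := by
    have hBt := lt_of_lt_of_le hbeta hBt₀
    have e1 : (deriv L t₀)^2/(L t₀)^2 - 2*C*lam/(L t₀)
        = ((deriv L t₀)^2 - 2*C*lam*L t₀)/(L t₀)^2 := by
      field_simp
    rw [e1] at hBt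
    have := mul_pos hBt (pow_pos hp0 2)
    rw [div_mul_cancel₀ _ (pow_ne_zero 2 hp0.ne')] at this
    linarith
  have hq0ne : deriv L t₀ ≠ 0 := by
    intro h
    rw [h] at key0
    have hpp : 0 < 2*C*lam*(L t₀) := by positivity
    nlinarith
  have hq0le : deriv L t₀ ≤ 0 := by
    rcases eq_or_lt_of_le ht₀le with h|h
    · rw [h]; exact hq1.le
    · have hcA : ContinuousAt (deriv L) t₀ := hcL'.continuousAt (isOpen_Ioo.mem_nhds ht₀mem)
      refine le_of_tendsto (hcA.tendsto.mono_left nhdsWithin_le_nhds)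
          (Filter.eventually_of_mem (Ioc_mem_nhdsGT h) ?_)
      exact fun s hs => (hneg s hs).le
  have hq0 : deriv L t₀ < 0 := lt_of_le_of_ne hq0le hq0ne
  have hcA : ContinuousAt (deriv L) t₀ := hcL'.continuousAt (isOpen_Ioo.mem_nhds ht₀mem)
  have hmem : (deriv L) ⁻¹' (Set.Iio 0) ∈ nhds t₀ := hcA (Iio_mem_nhds hq0)
  obtain ⟨ε, hε, hball⟩ := Metric.mem_nhds_iff.mp hmem
  set t' := max 0 (t₀ - ε/2) with ht'
  have ht'lt : t' < t₀ := max_lt ht₀pos (by linarith)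
  have ht'S : t' ∈ S := by
    refine ⟨⟨le_max_left _ _, le_trans ht'lt.le ht₀le⟩, fun s hs => ?_⟩
    rcases lt_or_ge s t₀ with hst|hst
    · apply hball
      rw [Metric.mem_ball, Real.dist_eq]
      have h1 : t₀ - ε/2 ≤ s := le_trans (le_max_right _ _) hs.1
      rw [abs_sub_lt_iff]
      constructor <;> linarith
    · rcases eq_or_lt_of_le hst with h|h
      · rw [← h]; exact hq0
      · exact hneg s ⟨h, hs.2⟩
  have := csInf_le hSbdd ht'S
  linarith

private lemma fwd_lemma (δ C lam : ℝ) (hδ : 0 < δ) (hC : 0 < C) (hlam : 0 < lam)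
    (L : ℝ → ℝ)
    (hcont : ContinuousOn L (Set.Icc 0 δ))
    (hdL : ∀ x ∈ Set.Ioo (0:ℝ) δ, DifferentiableAt ℝ L x)
    (hdL' : ∀ x ∈ Set.Ioo (0:ℝ) δ, DifferentiableAt ℝ (deriv L) x)
    (hcL' : ContinuousOn (deriv L) (Set.Ioo 0 δ))
    (hdiff : ∀ r ∈ Set.Icc (0:ℝ) δ, 0 < L r →
        deriv (deriv L) r ≥ (deriv L r)^2 / L r - C * lam)
    (r₁ : ℝ) (hr₁ : r₁ ∈ Set.Ioo (0:ℝ) δ) (hr₁' : r₁ ≤ 2*δ/3)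
    (hp1 : 0 < L r₁) (hq1 : 0 < deriv L r₁)
    (hG : 2*C*lam * L r₁ < (deriv L r₁)^2) :
    ∀ s ∈ Set.Icc r₁ (5*δ/6), C*lam/2*(s - r₁)^2 ≤ L s := by
  have hr₁δ₂ : r₁ < 5*δ/6 := lt_of_le_of_lt hr₁' (by linarith)
  have hδ₂δ : 5*δ/6 < δ := by linarith
  set S : Set ℝ := {t | t ∈ Set.Icc r₁ (5*δ/6) ∧ ∀ s ∈ Set.Icc r₁ t, 0 < deriv L s} with hS
  have hr₁S : r₁ ∈ S := by
    refine ⟨⟨le_rfl, hr₁δ₂.le⟩, fun s hs => ?_⟩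
    have : s = r₁ := le_antisymm hs.2 hs.1
    rwa [this]
  have hSne : S.Nonempty := ⟨r₁, hr₁S⟩
  have hSbdd : BddAbove S := ⟨5*δ/6, fun t ht => ht.1.2⟩
  set t₁ := sSup S with ht₁def
  have ht₁ge : r₁ ≤ t₁ := le_csSup hSbdd hr₁S
  have ht₁le : t₁ ≤ 5*δ/6 := csSup_le hSne (fun t ht => ht.1.2)
  have hposq : ∀ s ∈ Set.Ico r₁ t₁, 0 < deriv L s := by
    intro s hs
    obtain ⟨t, htS, hts⟩ := exists_lt_of_lt_csSup hSne hs.2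
    exact htS.2 s ⟨hs.1, hts.le⟩
  have hmono : MonotoneOn L (Set.Icc r₁ t₁) := by
    apply monotoneOn_of_deriv_nonneg (convex_Icc _ _)
        (hcont.mono (fun x hx => ⟨le_trans hr₁.1.le hx.1, le_trans hx.2 (le_trans ht₁le hδ₂δ.le)⟩))
    · intro x hx
      rw [interior_Icc] at hx
      exact (hdL x ⟨lt_of_lt_of_le hr₁.1 hx.1.le,
        lt_of_lt_of_le hx.2 (le_trans ht₁le hδ₂δ.le)⟩).differentiableWithinAt
    · intro x hx
      rw [interior_Icc] at hx
      exact (hposq x ⟨hx.1.le, hx.2⟩).le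
  have hsub : Set.Icc r₁ t₁ ⊆ Set.Ioo 0 δ := fun x hx =>
    ⟨lt_of_lt_of_le hr₁.1 hx.1, lt_of_le_of_lt hx.2 (lt_of_le_of_lt ht₁le hδ₂δ)⟩
  have hpos : ∀ s ∈ Set.Icc r₁ t₁, 0 < L s := fun s hs =>
    lt_of_lt_of_le hp1 (hmono ⟨le_rfl, ht₁ge⟩ hs hs.1)
  have hBmono := Bmonotone δ C lam L r₁ t₁ hsub hdL hdL' hcL' hdiff hpos
      (fun s hs => (hposq s ⟨hs.1.le, hs.2⟩).le)
  have hbeta : 0 < (deriv L r₁)^2/(L r₁)^2 - 2*C*lam/(L r₁) := by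
    have h := sub_pos.mpr hG
    have h2 := div_pos h (pow_pos hp1 2)
    have e1 : ((deriv L r₁)^2 - 2*C*lam*L r₁)/(L r₁)^2
        = (deriv L r₁)^2/(L r₁)^2 - 2*C*lam/(L r₁) := by
      field_simp
    rwa [e1] at h2
  have keyS : ∀ s ∈ Set.Icc r₁ t₁, 2*C*lam*(L s) < (deriv L s)^2 := by
    intro s hs
    have hBt : 0 < (deriv L s)^2/(L s)^2 - 2*C*lam/(L s) :=
      lt_of_lt_of_le hbeta (hBmono ⟨le_rfl, ht₁ge⟩ hs hs.1)
    have hps := hpos s hs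
    have e1 : (deriv L s)^2/(L s)^2 - 2*C*lam/(L s)
        = ((deriv L s)^2 - 2*C*lam*L s)/(L s)^2 := by
      field_simp
    rw [e1] at hBt
    have := mul_pos hBt (pow_pos hps 2)
    rw [div_mul_cancel₀ _ (pow_ne_zero 2 hps.ne')] at this
    linarith
  have hqt₁ : 0 < deriv L t₁ := by
    have hne : deriv L t₁ ≠ 0 := by
      intro h
      have := keyS t₁ ⟨ht₁ge, le_rfl⟩
      rw [h] at this
      have hpp : 0 < 2*C*lam*(L t₁) := by
        have := hpos t₁ ⟨ht₁ge, le_rfl⟩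
        positivity
      nlinarith
    rcases eq_or_lt_of_le ht₁ge with h|h
    · rw [← h]; exact hq1
    · have hcA : ContinuousAt (deriv L) t₁ :=
        hcL'.continuousAt (isOpen_Ioo.mem_nhds (hsub ⟨ht₁ge, le_rfl⟩))
      have hle : 0 ≤ deriv L t₁ := by
        refine ge_of_tendsto (hcA.tendsto.mono_left nhdsWithin_le_nhds)
            (Filter.eventually_of_mem (Ico_mem_nhdsLT h) ?_)
        exact fun s hs => (hposq s hs).le
      exact lt_of_le_of_ne hle (Ne.symm hne)
  have ht₁eq : t₁ = 5*δ/6 := by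
    by_contra hne
    have ht₁lt : t₁ < 5*δ/6 := lt_of_le_of_ne ht₁le hne
    have hcA : ContinuousAt (deriv L) t₁ :=
      hcL'.continuousAt (isOpen_Ioo.mem_nhds (hsub ⟨ht₁ge, le_rfl⟩))
    have hmem : (deriv L) ⁻¹' (Set.Ioi 0) ∈ nhds t₁ := hcA (Ioi_mem_nhds hqt₁)
    obtain ⟨ε, hε, hball⟩ := Metric.mem_nhds_iff.mp hmem
    set t'' := min (5*δ/6) (t₁ + ε/2) with ht''
    have ht''gt : t₁ < t'' := lt_min ht₁lt (by linarith)
    have ht''S : t'' ∈ S := by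
      refine ⟨⟨le_trans ht₁ge ht''gt.le, min_le_left _ _⟩, fun s hs => ?_⟩
      rcases lt_or_ge t₁ s with hst|hst
      · apply hball
        rw [Metric.mem_ball, Real.dist_eq]
        have h1 : s ≤ t₁ + ε/2 := le_trans hs.2 (min_le_right _ _)
        rw [abs_sub_lt_iff]
        constructor <;> linarith
      · rcases eq_or_lt_of_le hst with h|h
        · rw [h]; exact hqt₁
        · exact hposq s ⟨hs.1, h⟩
    have := le_csSup hSbdd ht''S
    linarith
  -- sqrt growth on [r₁, 5δ/6]
  rw [ht₁eq] at hpos keyS hposq hsub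
  have hsqrt_deriv : ∀ s ∈ Set.Ioo r₁ (5*δ/6),
      HasDerivAt (fun t => Real.sqrt (L t) - Real.sqrt (C*lam/2) * t)
        (1/(2*Real.sqrt (L s)) * deriv L s - Real.sqrt (C*lam/2)) s := by
    intro s hs
    have hs' : s ∈ Set.Icc r₁ (5*δ/6) := Set.Ioo_subset_Icc_self hs
    have hps : 0 < L s := hpos s hs'
    have h1 : HasDerivAt (fun t => Real.sqrt (L t)) (1/(2*Real.sqrt (L s)) * deriv L s) s :=
      (Real.hasDerivAt_sqrt hps.ne').comp s (hdL s (hsub hs')).hasDerivAt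
    simpa using h1.fun_sub ((hasDerivAt_id s).const_mul (Real.sqrt (C*lam/2)))
  have hphi_mono : MonotoneOn (fun t => Real.sqrt (L t) - Real.sqrt (C*lam/2) * t)
      (Set.Icc r₁ (5*δ/6)) := by
    apply monotoneOn_of_deriv_nonneg (convex_Icc _ _)
    · exact (Real.continuous_sqrt.comp_continuousOn
        (hcont.mono (fun x hx => ⟨le_trans hr₁.1.le hx.1, le_trans hx.2 hδ₂δ.le⟩))).sub
        (continuousOn_const.mul continuousOn_id)
    · intro x hx
      rw [interior_Icc] at hx
      exact ((hsqrt_deriv x hx).differentiableAt).differentiableWithinAt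
    · intro x hx
      rw [interior_Icc] at hx
      rw [(hsqrt_deriv x hx).deriv]
      have hx' : x ∈ Set.Icc r₁ (5*δ/6) := Set.Ioo_subset_Icc_self hx
      have hpx : 0 < L x := hpos x hx'
      have hsp : 0 < Real.sqrt (L x) := Real.sqrt_pos.mpr hpx
      have hqx : 0 < deriv L x := hposq x ⟨hx'.1, hx.2⟩
      have e2 : (2*Real.sqrt (L x)*Real.sqrt (C*lam/2))^2 = 2*C*lam*(L x) := by
        have h1 : Real.sqrt (L x)^2 = L x := Real.sq_sqrt hpx.le
        have h2 : Real.sqrt (C*lam/2)^2 = C*lam/2 := Real.sq_sqrt (by positivity)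
        calc (2*Real.sqrt (L x)*Real.sqrt (C*lam/2))^2
            = 4*(Real.sqrt (L x)^2)*(Real.sqrt (C*lam/2)^2) := by ring
          _ = 2*C*lam*(L x) := by rw [h1, h2]; ring
      have hlt : 2*Real.sqrt (L x)*Real.sqrt (C*lam/2) < deriv L x := by
        apply lt_of_pow_lt_pow_left₀ 2 hqx.le
        rw [e2]
        exact keyS x hx'
      have h3 : Real.sqrt (C*lam/2) ≤ deriv L x / (2*Real.sqrt (L x)) :=
        (le_div_iff₀ (by positivity)).mpr (by nlinarith)
      have e3 : deriv L x/(2*Real.sqrt (L x)) = 1/(2*Real.sqrt (L x))*deriv L x := by ring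
      rw [e3] at h3
      linarith
  intro s hs
  have hmin := hphi_mono ⟨le_rfl, hr₁δ₂.le⟩ hs hs.1
  simp only at hmin
  have h4 : Real.sqrt (C*lam/2) * (s - r₁) ≤ Real.sqrt (L s) := by
    have h5 : 0 ≤ Real.sqrt (L r₁) := Real.sqrt_nonneg _
    nlinarith [hmin]
  have h6 : 0 ≤ Real.sqrt (C*lam/2) * (s - r₁) := by
    have : 0 ≤ s - r₁ := by linarith [hs.1]
    positivity
  have h7 := pow_le_pow_left₀ h6 h4 2
  rw [Real.sq_sqrt (hpos s hs).le] at h7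
  calc C*lam/2*(s - r₁)^2 = (Real.sqrt (C*lam/2))^2*(s-r₁)^2 := by
        rw [Real.sq_sqrt (by positivity : (0:ℝ) ≤ C*lam/2)]
    _ = (Real.sqrt (C*lam/2)*(s-r₁))^2 := by ring
    _ ≤ L s := h7

set_option maxHeartbeats 1000000 in
theorem boundary_L2_quadratic_bound (δ C : ℝ) (hδ : 0 < δ) (hC : 0 < C) :
    ∃ lam₀ C' : ℝ, 0 < C' ∧
      ∀ lam : ℝ, lam₀ ≤ lam →
        ∀ L : ℝ → ℝ,
          ContDiffOn ℝ 2 L (Set.Icc 0 δ) →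
          (∀ r ∈ Set.Icc (0:ℝ) δ, 0 ≤ L r) →
          L 0 = 0 →
          (∀ r ∈ Set.Icc (0:ℝ) δ, 0 < L r →
              deriv (deriv L) r ≥ (deriv L r) ^ 2 / L r - C * lam) →
          (∫ r in (0:ℝ)..δ, L r) ≤ 1 →
          ∀ r ∈ Set.Icc (0:ℝ) (δ / 3), L r ≤ C' * lam * r ^ 2 := by
  refine ⟨max 1 (1297 / (C * δ^3)), C, hC, ?_⟩
  intro lam hlam L hL hnn hL0 hdiff hint r hr
  have hlam1 : (1:ℝ) ≤ lam := le_trans (le_max_left _ _) hlam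
  have hlam0 : 0 < lam := lt_of_lt_of_le one_pos hlam1
  have hbig : 1296 < C * lam * δ^3 := by
    have h1 : 1297 / (C * δ^3) ≤ lam := le_trans (le_max_right _ _) hlam
    have h2 : 0 < C * δ^3 := by positivity
    have h3 := (div_le_iff₀ h2).mp h1
    nlinarith
  have hcont : ContinuousOn L (Set.Icc 0 δ) := hL.continuousOn
  have hL2 : ContDiffOn ℝ 2 L (Set.Ioo 0 δ) := hL.mono Set.Ioo_subset_Icc_self
  have hderivC : ContDiffOn ℝ 1 (deriv L) (Set.Ioo 0 δ) :=
    hL2.deriv_of_isOpen isOpen_Ioo (by norm_num)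
  have hdL : ∀ x ∈ Set.Ioo (0:ℝ) δ, DifferentiableAt ℝ L x := fun x hx =>
    (hL2.differentiableOn (by norm_num)).differentiableAt (isOpen_Ioo.mem_nhds hx)
  have hdL' : ∀ x ∈ Set.Ioo (0:ℝ) δ, DifferentiableAt ℝ (deriv L) x := fun x hx =>
    (hderivC.differentiableOn (by norm_num)).differentiableAt (isOpen_Ioo.mem_nhds hx)
  have hcL' : ContinuousOn (deriv L) (Set.Ioo 0 δ) := hderivC.continuousOn
  have hminzero : ∀ x ∈ Set.Ioo (0:ℝ) δ, L x = 0 → deriv L x = 0 := by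
    intro x hx hx0
    have hmin : IsLocalMin L x := by
      have hmem : Set.Icc (0:ℝ) δ ∈ nhds x := Icc_mem_nhds hx.1 hx.2
      refine Filter.eventually_of_mem hmem (fun y hy => ?_)
      rw [hx0]
      exact hnn y hy
    exact hmin.deriv_eq_zero
  -- Key claim: L'(s)² ≤ 2Cλ L(s) on (0, 2δ/3]
  have key : ∀ s ∈ Set.Ioc (0:ℝ) (2*δ/3), (deriv L s)^2 ≤ 2*C*lam*(L s) := by
    intro s hs
    by_contra hcon
    push_neg at hcon
    have hsδ : s ∈ Set.Ioo (0:ℝ) δ := ⟨hs.1, lt_of_le_of_lt hs.2 (by linarith)⟩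
    have hps : 0 < L s := by
      rcases lt_or_eq_of_le (hnn s ⟨hs.1.le, hsδ.2.le⟩) with h|h
      · exact h
      · exfalso
        have hd0 := hminzero s hsδ h.symm
        rw [hd0, ← h] at hcon
        norm_num at hcon
    have hqne : deriv L s ≠ 0 := by
      intro h
      rw [h] at hcon
      have hpp : 0 < 2*C*lam*(L s) := by positivity
      nlinarith
    rcases lt_or_gt_of_ne hqne with hq|hq
    · exact back_lemma δ C lam hδ hC hlam0 L hcont hdL hdL' hcL' hL0 hdiff s hsδ hps hq hcon
    · have hgrow := fwd_lemma δ C lam hδ hC hlam0 L hcont hdL hdL' hcL' hdiff s hsδ hs.2 hps hq hcon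
      have hs56 : s ≤ 5*δ/6 := le_trans hs.2 (by linarith)
      have hIntL : IntervalIntegrable L MeasureTheory.volume 0 δ := by
        apply ContinuousOn.intervalIntegrable
        rwa [Set.uIcc_of_le hδ.le]
      have hIntL2 : IntervalIntegrable L MeasureTheory.volume s (5*δ/6) := by
        apply hIntL.mono_set
        rw [Set.uIcc_of_le hδ.le, Set.uIcc_of_le hs56]
        exact fun x hx => ⟨le_trans hs.1.le hx.1, le_trans hx.2 (by linarith)⟩
      have hIntg : IntervalIntegrable (fun t => C*lam/2*(t-s)^2) MeasureTheory.volume s (5*δ/6) :=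
        (Continuous.intervalIntegrable (by continuity) _ _)
      have h1 : (∫ t in s..(5*δ/6), C*lam/2*(t-s)^2) ≤ ∫ t in s..(5*δ/6), L t :=
        intervalIntegral.integral_mono_on hs56 hIntg hIntL2 (fun x hx => hgrow x hx)
      have hae : 0 ≤ᵐ[MeasureTheory.volume.restrict (Set.Ioc (0:ℝ) δ)] L := by
        refine Filter.eventually_of_mem (MeasureTheory.self_mem_ae_restrict measurableSet_Ioc) ?_
        exact fun x hx => hnn x ⟨hx.1.le, hx.2⟩
      have h2 : (∫ t in s..(5*δ/6), L t) ≤ ∫ t in (0:ℝ)..δ, L t :=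
        intervalIntegral.integral_mono_interval hs.1.le hs56 (by linarith) hae hIntL
      have h3 : (∫ t in s..(5*δ/6), C*lam/2*(t-s)^2) = C*lam/2*((5*δ/6-s)^3/3) := by
        simp_rw [intervalIntegral.integral_const_mul]
        rw [intervalIntegral.integral_comp_sub_right (fun t => t^2) s]
        rw [integral_pow]
        norm_num
      have hcube : (δ/6)^3 ≤ (5*δ/6 - s)^3 :=
        pow_le_pow_left₀ (by positivity) (by linarith [hs.2]) 3
      have h6 := mul_le_mul_of_nonneg_left hcube (le_of_lt (mul_pos hC hlam0))
      have h5 : C*lam*δ^3/1296 ≤ C*lam/2*((5*δ/6-s)^3/3) := by nlinarith [h6]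
      rw [h3] at h1
      have hfin : 1 < C*lam*δ^3/1296 := by
        rw [lt_div_iff₀ (by norm_num)]
        linarith
      linarith
  -- Conclusion
  rcases eq_or_lt_of_le hr.1 with h0|hrpos
  · rw [← h0, hL0]
    norm_num
  · have hrδ : r ≤ δ/3 := hr.2
    set Z : Set ℝ := {t | t ∈ Set.Icc 0 r ∧ L t = 0} with hZ
    have hZeq : Z = Set.Icc 0 r ∩ L ⁻¹' {0} := by
      ext x
      simp [hZ, Set.mem_setOf_eq, Set.mem_inter_iff]
    have hZc : IsClosed Z := by
      rw [hZeq]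
      exact (hcont.mono (fun x hx => ⟨hx.1, le_trans hx.2 (by linarith)⟩)).preimage_isClosed_of_isClosed
        isClosed_Icc isClosed_singleton
    have h0Z : (0:ℝ) ∈ Z := ⟨⟨le_rfl, hrpos.le⟩, hL0⟩
    have hZbdd : BddAbove Z := ⟨r, fun t ht => ht.1.2⟩
    set a := sSup Z with ha
    have haZ : a ∈ Z := hZc.csSup_mem ⟨0, h0Z⟩ hZbdd
    have ha0 : 0 ≤ a := haZ.1.1
    have har : a ≤ r := haZ.1.2
    have hLa : L a = 0 := haZ.2
    have hposZ : ∀ s ∈ Set.Ioc a r, 0 < L s := by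
      intro s hs
      have hs0 : 0 ≤ s := le_trans ha0 hs.1.le
      rcases lt_or_eq_of_le (hnn s ⟨hs0, le_trans hs.2 (by linarith)⟩) with h|h
      · exact h
      · exfalso
        have hsZ : s ∈ Z := ⟨⟨hs0, hs.2⟩, h.symm⟩
        have := le_csSup hZbdd hsZ
        linarith [hs.1]
    rcases eq_or_lt_of_le har with haeq|halt
    · rw [haeq] at hLa
      rw [hLa]
      positivity
    · -- φ(t) = √(Cλ/2)·t - √(L t) is monotone on [a, r]
      have hsub2 : Set.Icc a r ⊆ Set.Icc 0 δ := fun x hx =>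
        ⟨le_trans ha0 hx.1, le_trans hx.2 (by linarith)⟩
      have hsqrt_deriv : ∀ x ∈ Set.Ioo a r,
          HasDerivAt (fun t => Real.sqrt (C*lam/2) * t - Real.sqrt (L t))
            (Real.sqrt (C*lam/2) - 1/(2*Real.sqrt (L x)) * deriv L x) x := by
        intro x hx
        have hpx : 0 < L x := hposZ x ⟨hx.1, hx.2.le⟩
        have hx0δ : x ∈ Set.Ioo (0:ℝ) δ :=
          ⟨lt_of_le_of_lt ha0 hx.1, lt_of_lt_of_le hx.2 (by linarith)⟩
        have h1 : HasDerivAt (fun t => Real.sqrt (L t)) (1/(2*Real.sqrt (L x)) * deriv L x) x :=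
          (Real.hasDerivAt_sqrt hpx.ne').comp x (hdL x hx0δ).hasDerivAt
        simpa using ((hasDerivAt_id x).const_mul (Real.sqrt (C*lam/2))).fun_sub h1
      have hφmono : MonotoneOn (fun t => Real.sqrt (C*lam/2) * t - Real.sqrt (L t))
          (Set.Icc a r) := by
        apply monotoneOn_of_deriv_nonneg (convex_Icc _ _)
        · exact (continuousOn_const.mul continuousOn_id).sub
            (Real.continuous_sqrt.comp_continuousOn (hcont.mono hsub2))
        · intro x hx
          rw [interior_Icc] at hx
          exact ((hsqrt_deriv x hx).differentiableAt).differentiableWithinAt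
        · intro x hx
          rw [interior_Icc] at hx
          rw [(hsqrt_deriv x hx).deriv]
          have hpx : 0 < L x := hposZ x ⟨hx.1, hx.2.le⟩
          have hsp : 0 < Real.sqrt (L x) := Real.sqrt_pos.mpr hpx
          have hkx : (deriv L x)^2 ≤ 2*C*lam*(L x) :=
            key x ⟨lt_of_le_of_lt ha0 hx.1, le_trans hx.2.le (by linarith)⟩
          have habs : deriv L x ≤ Real.sqrt ((deriv L x)^2) := by
            rw [Real.sqrt_sq_eq_abs]
            exact le_abs_self _
          have e2 : Real.sqrt (2*C*lam*(L x)) = 2*Real.sqrt (L x)*Real.sqrt (C*lam/2) := by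
            rw [show 2*C*lam*(L x) = (2*Real.sqrt (L x)*Real.sqrt (C*lam/2))^2 by
              have hh1 : Real.sqrt (L x)^2 = L x := Real.sq_sqrt hpx.le
              have hh2 : Real.sqrt (C*lam/2)^2 = C*lam/2 := Real.sq_sqrt (by positivity)
              calc 2*C*lam*(L x) = 4*(C*lam/2)*(L x) := by ring
                _ = 4*(Real.sqrt (C*lam/2)^2)*(Real.sqrt (L x)^2) := by rw [hh1, hh2]
                _ = (2*Real.sqrt (L x)*Real.sqrt (C*lam/2))^2 := by ring]
            exact Real.sqrt_sq (by positivity)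
          have h7 : deriv L x ≤ 2*Real.sqrt (L x)*Real.sqrt (C*lam/2) := by
            calc deriv L x ≤ Real.sqrt ((deriv L x)^2) := habs
              _ ≤ Real.sqrt (2*C*lam*(L x)) := Real.sqrt_le_sqrt hkx
              _ = _ := e2
          have h8 : 1/(2*Real.sqrt (L x)) * deriv L x ≤ Real.sqrt (C*lam/2) := by
            rw [show 1/(2*Real.sqrt (L x)) * deriv L x = deriv L x/(2*Real.sqrt (L x)) by ring]
            rw [div_le_iff₀ (by positivity)]
            linarith [h7]
          linarith
      have hfin := hφmono ⟨le_rfl, har⟩ ⟨har, le_rfl⟩ har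
      simp only at hfin
      rw [hLa, Real.sqrt_zero, sub_zero] at hfin
      have h9 : Real.sqrt (L r) ≤ Real.sqrt (C*lam/2) * r := by
        have hnn2 : 0 ≤ Real.sqrt (C*lam/2) * a := mul_nonneg (Real.sqrt_nonneg _) ha0
        linarith
      have h10 : L r ≤ (Real.sqrt (C*lam/2) * r)^2 := by
        have := pow_le_pow_left₀ (Real.sqrt_nonneg (L r)) h9 2
        rwa [Real.sq_sqrt (hnn r ⟨hrpos.le, by linarith⟩)] at this
      have h11 : (Real.sqrt (C*lam/2) * r)^2 = C*lam/2 * r^2 := by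
        rw [mul_pow, Real.sq_sqrt (by positivity : (0:ℝ) ≤ C*lam/2)]
      have h12 : 0 ≤ C*lam*r^2 := mul_nonneg (mul_pos hC hlam0).le (sq_nonneg r)
      linarith [h10, h11.le, h11.ge]
end

section
/- For the cylinder eigenfunctions u_{m,n}(x,θ) = sqrt(2/(ab)) sin(mπx/a) e^{inπθ/b} on [0,a] × (ℝ/bℤ), the squared L² norm of the normal derivative over the boundary (the two circles x = 0 and x = a) equals (4/a)(mπ/a)², and hence is at most (4/a)λ where λ = (mπ/a)² + (nπ/b)²; moreover for fixed m, the ratio of this quantity to λ tends to 0 as n → ∞. -/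
open Real Filter

/-- The cylinder eigenfunction `u(x,θ) = √(2/(ab)) sin(mπx/a) e^{inπθ/b}`. -/
noncomputable def cylEigen (a b : ℝ) (m : ℕ) (n : ℤ) (x θ : ℝ) : ℂ :=
  (Real.sqrt (2 / (a * b)) * Real.sin (m * π * x / a) : ℝ) *
    Complex.exp (Complex.I * n * π * θ / b)

/-- Squared `L²` norm of the normal derivative over the two boundary circles. -/
noncomputable def cylBdryNorm (a b : ℝ) (m : ℕ) (n : ℤ) : ℝ :=
  ∫ θ in (0:ℝ)..b,
    ‖deriv (fun x => cylEigen a b m n x θ) 0‖ ^ 2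
      + ‖deriv (fun x => cylEigen a b m n x θ) a‖ ^ 2

lemma cylDeriv (a b : ℝ) (m : ℕ) (n : ℤ) (θ x₀ : ℝ) :
    HasDerivAt (fun x : ℝ => cylEigen a b m n x θ)
      ((Real.sqrt (2 / (a * b)) * (Real.cos (m * π * x₀ / a) * (m * π / a)) : ℝ) *
        Complex.exp (Complex.I * n * π * θ / b)) x₀ := by
  have h1 : HasDerivAt (fun x : ℝ => (m : ℝ) * π * x / a) ((m : ℝ) * π / a) x₀ := by
    simpa using ((hasDerivAt_id x₀).const_mul ((m : ℝ) * π)).div_const a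
  have h2 := (Real.hasDerivAt_sin ((m : ℝ) * π * x₀ / a)).comp x₀ h1
  have h3 := (h2.ofReal_comp.mul_const (Complex.exp (Complex.I * n * π * θ / b))).const_mul
    ((Real.sqrt (2 / (a * b)) : ℂ))
  have e : (fun x : ℝ => cylEigen a b m n x θ) = (fun y => (Real.sqrt (2 / (a * b)) : ℂ) *
      (((Real.sin ∘ fun x : ℝ => (m : ℝ) * π * x / a) y : ℝ) * Complex.exp (Complex.I * n * π * θ / b))) := by
    funext x; simp only [cylEigen, Function.comp]; push_cast; ring
  rw [e]
  exact h3.congr_deriv (by push_cast; ring)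

lemma cylAbsSq (a b : ℝ) (hab : 0 ≤ 2 / (a * b)) (m : ℕ) (n : ℤ) (θ x₀ : ℝ) :
    ‖deriv (fun x => cylEigen a b m n x θ) x₀‖ ^ 2 =
      2 / (a * b) * ((m * π / a) ^ 2 * Real.cos (m * π * x₀ / a) ^ 2) := by
  rw [(cylDeriv a b m n θ x₀).deriv]
  have hexp : ‖Complex.exp (Complex.I * n * π * θ / b)‖ = 1 := by
    rw [show Complex.I * (n : ℂ) * π * θ / b = ((n * π * θ / b : ℝ) : ℂ) * Complex.I by
      push_cast; ring, Complex.norm_exp_ofReal_mul_I]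
  rw [norm_mul, hexp, Complex.norm_real, Real.norm_eq_abs, mul_one, sq_abs]
  rw [mul_pow, mul_pow, Real.sq_sqrt hab]
  ring

lemma cylBdryNorm_eq (a b : ℝ) (ha : 0 < a) (hb : 0 < b) (m : ℕ) (n : ℤ) :
    cylBdryNorm a b m n = 4 / a * (m * π / a) ^ 2 := by
  have hab : (0:ℝ) ≤ 2 / (a * b) := by positivity
  have h0 : Real.cos ((m : ℝ) * π * 0 / a) ^ 2 = 1 := by
    simp
  have hA : Real.cos ((m : ℝ) * π * a / a) ^ 2 = 1 := by
    have : (m : ℝ) * π * a / a = m * π := by field_simp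
    rw [this]
    have hs : Real.sin ((m : ℝ) * π) = 0 := Real.sin_nat_mul_pi m
    have := Real.sin_sq_add_cos_sq ((m : ℝ) * π)
    nlinarith
  unfold cylBdryNorm
  have : ∀ θ : ℝ,
      ‖deriv (fun x => cylEigen a b m n x θ) 0‖ ^ 2
        + ‖deriv (fun x => cylEigen a b m n x θ) a‖ ^ 2
      = 2 * (2 / (a * b)) * (m * π / a) ^ 2 := by
    intro θ
    rw [cylAbsSq a b hab m n θ 0, cylAbsSq a b hab m n θ a, h0, hA]
    ring
  rw [intervalIntegral.integral_congr (fun θ _ => this θ),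
    intervalIntegral.integral_const, smul_eq_mul]
  field_simp
  ring

theorem cylinder_boundary_norm (a b : ℝ) (ha : 0 < a) (hb : 0 < b)
    (m : ℕ) (hm : 0 < m) :
    (∀ n : ℤ, cylBdryNorm a b m n = 4 / a * (m * π / a) ^ 2) ∧
    (∀ n : ℤ, cylBdryNorm a b m n ≤ 4 / a * ((m * π / a) ^ 2 + (n * π / b) ^ 2)) ∧
    Tendsto (fun n : ℕ =>
        cylBdryNorm a b m n / ((m * π / a) ^ 2 + ((n : ℝ) * π / b) ^ 2))
      atTop (nhds 0) := by
  have key := fun n => cylBdryNorm_eq a b ha hb m n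
  refine ⟨key, fun n => ?_, ?_⟩
  · rw [key n]
    have h4a : (0:ℝ) ≤ 4 / a := by positivity
    nlinarith [sq_nonneg ((n : ℝ) * π / b), sq_nonneg ((m : ℝ) * π / a)]
  · simp only [key]
    have hdenom : Tendsto (fun n : ℕ => ((m : ℝ) * π / a) ^ 2 + ((n : ℝ) * π / b) ^ 2)
        atTop atTop := by
      apply tendsto_atTop_add_const_left
      have h1 : Tendsto (fun n : ℕ => (n : ℝ) * (π / b)) atTop atTop :=
        tendsto_natCast_atTop_atTop.atTop_mul_const (div_pos Real.pi_pos hb)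
      have h2 := (tendsto_pow_atTop (n := 2) two_ne_zero).comp h1
      refine h2.congr fun n => ?_
      simp [Function.comp]; ring
    exact tendsto_const_nhds.div_atTop hdenom
end
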